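/- (Joint optimality of the two-step update.) Fix a positive pmf q2 on Z. Let q1* be the pmf on X with q1*(x) ∝ exp(∑_z q2(z)·log ℓ(x,z)), and then let q2** be the pmf on Z with q2**(z) ∝ π(z)·exp(∑_x q1*(x)·log ℓ(x,z)). Then one full generate-reflect round does not decrease the ELBO: L(q1*, q2**) ≥ L(q1*, q2) ≥ L(q1, q2) for every pmf q1 on X; in particular L(q1*, q2**) ≥ L(q1, q2) for every pmf q1 on X. -/

import Mathlib

open Finset

noncomputable section

/-- `q` is a probability mass function on the finite type `T`. -/
def IsPMF {T : Type*} [Fintype T] (q : T → ℝ) : Prop :=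
  (∀ t, 0 ≤ q t) ∧ ∑ t, q t = 1

/-- `q` is a strictly positive probability mass function on the finite type `T`. -/
def IsPosPMF {T : Type*} [Fintype T] (q : T → ℝ) : Prop :=
  (∀ t, 0 < q t) ∧ ∑ t, q t = 1

/-- KL divergence `KL(q ‖ p)`; terms with `q t = 0` contribute `0` since `0 * log _ = 0`. -/
def KL {T : Type*} [Fintype T] (q p : T → ℝ) : ℝ :=
  ∑ t, q t * Real.log (q t / p t)

/-- Shannon entropy `H(q)`; terms with `q t = 0` contribute `0`. -/
def entropy {T : Type*} [Fintype T] (q : T → ℝ) : ℝ :=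
  -∑ t, q t * Real.log (q t)

/-- Mean-field ELBO `L(q1, q2)`; terms with `q1 x * q2 z = 0` contribute `0`. -/
def ELBO {X Z : Type*} [Fintype X] [Fintype Z] (ℓ : X → Z → ℝ) (π : Z → ℝ)
    (q1 : X → ℝ) (q2 : Z → ℝ) : ℝ :=
  ∑ x, ∑ z, q1 x * q2 z * Real.log (ℓ x z * π z / (q1 x * q2 z))

/-- The evidence `Ev = ∑_{x,z} ℓ(x,z) π(z)`. -/
def evid {X Z : Type*} [Fintype X] [Fintype Z] (ℓ : X → Z → ℝ) (π : Z → ℝ) : ℝ :=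
  ∑ x, ∑ z, ℓ x z * π z

/-- The joint posterior `post(x,z) = ℓ(x,z) π(z) / Ev` on `X × Z`. -/
def post {X Z : Type*} [Fintype X] [Fintype Z] (ℓ : X → Z → ℝ) (π : Z → ℝ) :
    X × Z → ℝ :=
  fun p => ℓ p.1 p.2 * π p.2 / evid ℓ π

/-- The product pmf `(q1 ⊗ q2)(x,z) = q1(x) q2(z)` on `X × Z`. -/
def prodPMF {X Z : Type*} [Fintype X] [Fintype Z] (q1 : X → ℝ) (q2 : Z → ℝ) :
    X × Z → ℝ :=
  fun p => q1 p.1 * q2 p.2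

lemma gibbs_le {T : Type*} [Fintype T] [Nonempty T] (w : T → ℝ) (hw : ∀ t, 0 < w t)
    (q : T → ℝ) (hq : IsPMF q) :
    ∑ t, q t * Real.log (w t / q t) ≤ Real.log (∑ t, w t) := by
  set W := ∑ t, w t with hWdef
  have hW : 0 < W := Finset.sum_pos (fun t _ => hw t) Finset.univ_nonempty
  have hbound : ∀ t, q t * Real.log (w t / q t) ≤ w t / W - q t + q t * Real.log W := by
    intro t
    rcases eq_or_lt_of_le (hq.1 t) with h0 | hpos
    · rw [← h0]
      simp only [zero_mul, mul_zero, sub_zero, add_zero]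
      exact div_nonneg (hw t).le hW.le
    · have hx : q t ≠ 0 := ne_of_gt hpos
      have hwt : 0 < w t := hw t
      have h1 : w t / q t = (w t / (W * q t)) * W := by field_simp
      have h2 : Real.log (w t / q t) = Real.log (w t / (W * q t)) + Real.log W := by
        rw [h1, Real.log_mul (by positivity) (ne_of_gt hW)]
      have h3 : Real.log (w t / (W * q t)) ≤ w t / (W * q t) - 1 :=
        Real.log_le_sub_one_of_pos (by positivity)
      have h5 := mul_le_mul_of_nonneg_left h3 (le_of_lt hpos)
      have h4 : q t * (w t / (W * q t) - 1) = w t / W - q t := by field_simp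
      rw [h2, mul_add]
      linarith
  calc ∑ t, q t * Real.log (w t / q t) ≤ ∑ t, (w t / W - q t + q t * Real.log W) :=
        Finset.sum_le_sum fun t _ => hbound t
    _ = Real.log W := by
        rw [Finset.sum_add_distrib, Finset.sum_sub_distrib, ← Finset.sum_div,
          ← Finset.sum_mul, hq.2, ← hWdef]
        field_simp
        ring

lemma gibbs_eq {T : Type*} [Fintype T] [Nonempty T] (w : T → ℝ) (hw : ∀ t, 0 < w t) :
    ∑ t, (w t / ∑ s, w s) * Real.log (w t / (w t / ∑ s, w s)) = Real.log (∑ s, w s) := by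
  have hW : 0 < ∑ s, w s := Finset.sum_pos (fun t _ => hw t) Finset.univ_nonempty
  have h1 : ∀ t, w t / (w t / ∑ s, w s) = ∑ s, w s := by
    intro t; have := hw t; field_simp
  simp_rw [h1]
  rw [← Finset.sum_mul, ← Finset.sum_div, div_self (ne_of_gt hW), one_mul]

lemma normalized_isPosPMF {T : Type*} [Fintype T] [Nonempty T] (w : T → ℝ)
    (hw : ∀ t, 0 < w t) : IsPosPMF (fun t => w t / ∑ s, w s) := by
  have hW : 0 < ∑ s, w s := Finset.sum_pos (fun t _ => hw t) Finset.univ_nonempty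
  exact ⟨fun t => div_pos (hw t) hW, by rw [← Finset.sum_div, div_self (ne_of_gt hW)]⟩

lemma elbo_decomp1 {X Z : Type*} [Fintype X] [Fintype Z] (ℓ : X → Z → ℝ) (π : Z → ℝ)
    (hℓ : ∀ x z, 0 < ℓ x z) (hπ : ∀ z, 0 < π z)
    (q1 : X → ℝ) (hq1 : IsPMF q1) (q2 : Z → ℝ) (hq2 : IsPosPMF q2) :
    ELBO ℓ π q1 q2 =
      (∑ x, q1 x * Real.log (Real.exp (∑ z, q2 z * Real.log (ℓ x z)) / q1 x))
        + ∑ z, q2 z * Real.log (π z / q2 z) := by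
  have key : ∀ x, ∑ z, q1 x * q2 z * Real.log (ℓ x z * π z / (q1 x * q2 z)) =
      q1 x * Real.log (Real.exp (∑ z, q2 z * Real.log (ℓ x z)) / q1 x)
        + q1 x * ∑ z, q2 z * Real.log (π z / q2 z) := by
    intro x
    rcases eq_or_lt_of_le (hq1.1 x) with h0 | hpos
    · simp [← h0]
    · have hx : q1 x ≠ 0 := ne_of_gt hpos
      have hterm : ∀ z, q1 x * q2 z * Real.log (ℓ x z * π z / (q1 x * q2 z)) =
          q1 x * (q2 z * Real.log (ℓ x z) + q2 z * Real.log (π z / q2 z)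
            - q2 z * Real.log (q1 x)) := by
        intro z
        have hz : 0 < q2 z := hq2.1 z
        have hl : 0 < ℓ x z := hℓ x z
        have hp : 0 < π z := hπ z
        rw [Real.log_div (by positivity) (by positivity),
          Real.log_mul (ne_of_gt hl) (ne_of_gt hp),
          Real.log_mul hx (ne_of_gt hz), Real.log_div (ne_of_gt hp) (ne_of_gt hz)]
        ring
      rw [Finset.sum_congr rfl fun z _ => hterm z, ← Finset.mul_sum,
        Real.log_div (Real.exp_ne_zero _) hx, Real.log_exp,
        Finset.sum_sub_distrib, Finset.sum_add_distrib, ← Finset.sum_mul, hq2.2]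
      ring
  unfold ELBO
  rw [Finset.sum_congr rfl fun x _ => key x, Finset.sum_add_distrib,
    ← Finset.sum_mul, hq1.2, one_mul]

lemma elbo_decomp2 {X Z : Type*} [Fintype X] [Fintype Z] (ℓ : X → Z → ℝ) (π : Z → ℝ)
    (hℓ : ∀ x z, 0 < ℓ x z) (hπ : ∀ z, 0 < π z)
    (q1 : X → ℝ) (hq1 : IsPosPMF q1) (q2 : Z → ℝ) (hq2 : IsPMF q2) :
    ELBO ℓ π q1 q2 =
      (∑ z, q2 z * Real.log (π z * Real.exp (∑ x, q1 x * Real.log (ℓ x z)) / q2 z))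
        - ∑ x, q1 x * Real.log (q1 x) := by
  have key : ∀ z, ∑ x, q1 x * q2 z * Real.log (ℓ x z * π z / (q1 x * q2 z)) =
      q2 z * Real.log (π z * Real.exp (∑ x, q1 x * Real.log (ℓ x z)) / q2 z)
        - q2 z * ∑ x, q1 x * Real.log (q1 x) := by
    intro z
    rcases eq_or_lt_of_le (hq2.1 z) with h0 | hpos
    · simp [← h0]
    · have hz : q2 z ≠ 0 := ne_of_gt hpos
      have hp : 0 < π z := hπ z
      have hterm : ∀ x, q1 x * q2 z * Real.log (ℓ x z * π z / (q1 x * q2 z)) =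
          q2 z * (q1 x * Real.log (ℓ x z) + q1 x * Real.log (π z)
            - q1 x * Real.log (q1 x) - q1 x * Real.log (q2 z)) := by
        intro x
        have hx : 0 < q1 x := hq1.1 x
        have hl : 0 < ℓ x z := hℓ x z
        rw [Real.log_div (by positivity) (by positivity),
          Real.log_mul (ne_of_gt hl) (ne_of_gt hp),
          Real.log_mul (ne_of_gt hx) hz]
        ring
      rw [Finset.sum_congr rfl fun x _ => hterm x, ← Finset.mul_sum,
        Real.log_div (by positivity) hz,
        Real.log_mul (ne_of_gt hp) (Real.exp_ne_zero _), Real.log_exp,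
        Finset.sum_sub_distrib, Finset.sum_sub_distrib, Finset.sum_add_distrib,
        ← Finset.sum_mul, ← Finset.sum_mul, hq1.2]
      ring
  unfold ELBO
  rw [Finset.sum_comm, Finset.sum_congr rfl fun z _ => key z, Finset.sum_sub_distrib,
    ← Finset.sum_mul, hq2.2, one_mul]

/-- joint optimality of one full generate-reflect round:
`L(q1*, q2**) ≥ L(q1*, q2) ≥ L(q1, q2)` for every pmf `q1`. -/
theorem generate_reflect_round {X Z : Type*} [Fintype X] [Fintype Z]
    [Nonempty X] [Nonempty Z]
    (ℓ : X → Z → ℝ) (π : Z → ℝ) (hℓ : ∀ x z, 0 < ℓ x z) (hπ : IsPosPMF π)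
    (q2 : Z → ℝ) (hq2 : IsPosPMF q2) :
    let q1star : X → ℝ := fun x =>
      Real.exp (∑ z, q2 z * Real.log (ℓ x z)) /
        ∑ x', Real.exp (∑ z, q2 z * Real.log (ℓ x' z))
    let q2star2 : Z → ℝ := fun z =>
      π z * Real.exp (∑ x, q1star x * Real.log (ℓ x z)) /
        ∑ z', π z' * Real.exp (∑ x, q1star x * Real.log (ℓ x z'))
    (∀ q1 : X → ℝ, IsPMF q1 →
      ELBO ℓ π q1 q2 ≤ ELBO ℓ π q1star q2 ∧
      ELBO ℓ π q1star q2 ≤ ELBO ℓ π q1star q2star2) ∧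
    (∀ q1 : X → ℝ, IsPMF q1 → ELBO ℓ π q1 q2 ≤ ELBO ℓ π q1star q2star2) := by
  intro q1star q2star2
  set w1 : X → ℝ := fun x => Real.exp (∑ z, q2 z * Real.log (ℓ x z)) with hw1def
  have hw1 : ∀ x, 0 < w1 x := fun x => Real.exp_pos _
  have hq1star_pos : IsPosPMF q1star := normalized_isPosPMF w1 hw1
  have hq1star : IsPMF q1star := ⟨fun t => (hq1star_pos.1 t).le, hq1star_pos.2⟩
  set w2 : Z → ℝ := fun z => π z * Real.exp (∑ x, q1star x * Real.log (ℓ x z)) with hw2def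
  have hw2 : ∀ z, 0 < w2 z := fun z => mul_pos (hπ.1 z) (Real.exp_pos _)
  have hq2star2_pos : IsPosPMF q2star2 := normalized_isPosPMF w2 hw2
  have hq2star2 : IsPMF q2star2 := ⟨fun t => (hq2star2_pos.1 t).le, hq2star2_pos.2⟩
  have hq2' : IsPMF q2 := ⟨fun t => (hq2.1 t).le, hq2.2⟩
  -- step 1 : ∀ pmf q1, ELBO q1 q2 ≤ ELBO q1star q2
  have step1 : ∀ q1 : X → ℝ, IsPMF q1 → ELBO ℓ π q1 q2 ≤ ELBO ℓ π q1star q2 := by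
    intro q1 hq1
    rw [elbo_decomp1 ℓ π hℓ hπ.1 q1 hq1 q2 hq2,
        elbo_decomp1 ℓ π hℓ hπ.1 q1star hq1star q2 hq2]
    have h1 : ∑ x, q1 x * Real.log (w1 x / q1 x) ≤ Real.log (∑ x, w1 x) :=
      gibbs_le w1 hw1 q1 hq1
    have h2 : ∑ x, q1star x * Real.log (w1 x / q1star x) = Real.log (∑ x, w1 x) :=
      gibbs_eq w1 hw1
    have h1' : ∑ x, q1 x * Real.log (w1 x / q1 x)
        ≤ ∑ x, q1star x * Real.log (w1 x / q1star x) := h2 ▸ h1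
    exact add_le_add_left h1' _
  have step2 : ELBO ℓ π q1star q2 ≤ ELBO ℓ π q1star q2star2 := by
    rw [elbo_decomp2 ℓ π hℓ hπ.1 q1star hq1star_pos q2 hq2',
        elbo_decomp2 ℓ π hℓ hπ.1 q1star hq1star_pos q2star2 hq2star2]
    have h1 : ∑ z, q2 z * Real.log (w2 z / q2 z) ≤ Real.log (∑ z, w2 z) :=
      gibbs_le w2 hw2 q2 hq2'
    have h2 : ∑ z, q2star2 z * Real.log (w2 z / q2star2 z) = Real.log (∑ z, w2 z) :=
      gibbs_eq w2 hw2
    exact sub_le_sub_right (h2 ▸ h1) _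
  exact ⟨fun q1 hq1 => ⟨step1 q1 hq1, step2⟩,
    fun q1 hq1 => le_trans (step1 q1 hq1) step2⟩
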